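/- Let ρ be a probability measure on ℝ with exponential moment and positive drift λ > 0. For a > 0 small enough (so that ∫ e^{-ay} dρ(y) < 1), and for any nonnegative Schwartz function f and x ∈ ℝ, the sum Σ_{n≥0} ∫ e^{-ay} f(x+y) d(ρ^{⋆n})(y) equals (1/2π) ∫_ℝ f̂(ξ) e^{iξx} (1 − ρ̂(a − iξ))^{-1} dξ, where f̂ is the Fourier transform of f. -/

import Mathlib

open MeasureTheory

noncomputable def convPow (ρ : Measure ℝ) : ℕ → Measure ℝ
  | 0 => Measure.dirac 0
  | n + 1 => ((convPow ρ n).prod ρ).map (fun p => p.1 + p.2)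

open Complex FourierTransform Real
noncomputable def cplx (f : SchwartzMap ℝ ℝ) : SchwartzMap ℝ ℂ where
  toFun := fun t => (f t : ℂ)
  smooth' := Complex.ofRealCLM.contDiff.comp f.smooth'
  decay' := by
    intro k n
    obtain ⟨C, hC⟩ := f.decay' k n
    refine ⟨C, fun x => ?_⟩
    have h : ‖iteratedFDeriv ℝ n (Complex.ofRealLI ∘ (f : ℝ → ℝ)) x‖
        = ‖iteratedFDeriv ℝ n (f : ℝ → ℝ) x‖ :=
      Complex.ofRealLI.norm_iteratedFDeriv_comp_left (f.smooth (n : ℕ∞)).contDiffAt le_rfl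
    have h2 : (Complex.ofRealLI ∘ (f : ℝ → ℝ)) = fun t => ((f t : ℝ) : ℂ) := rfl
    rw [h2] at h
    rw [h]
    exact hC x

@[simp] lemma cplx_apply (f : SchwartzMap ℝ ℝ) (t : ℝ) : cplx f t = (f t : ℂ) := rfl

lemma F_eq (f : SchwartzMap ℝ ℝ) (ξ : ℝ) :
    (∫ v : ℝ, ((f v : ℝ) : ℂ) * Complex.exp (-(Complex.I * ξ) * v))
      = 𝓕 (⇑(cplx f)) (ξ / (2 * π)) := by
  rw [Real.fourier_real_eq_integral_exp_smul]
  congr 1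
  ext v
  rw [smul_eq_mul, mul_comm, cplx_apply]
  congr 1
  have hπ : (π : ℝ) ≠ 0 := Real.pi_ne_zero
  have : (-2 * π * v * (ξ / (2 * π)) : ℝ) = -(v * ξ) := by field_simp
  rw [this]
  push_cast
  ring

lemma inv_key (f : SchwartzMap ℝ ℝ) (u : ℝ) :
    ((f u : ℝ) : ℂ) = (1 / (2 * (π : ℂ))) *
      ∫ ξ : ℝ, (∫ v : ℝ, ((f v : ℝ) : ℂ) * Complex.exp (-(Complex.I * ξ) * v))
        * Complex.exp (Complex.I * ξ * u) := by
  have hg : Integrable (⇑(cplx f)) := (cplx f).integrable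
  have hFg : Integrable (𝓕 ⇑(cplx f)) := by
    have : 𝓕 ⇑(cplx f) = ⇑(SchwartzMap.fourierTransformCLM ℂ (cplx f)) := by
      rw [SchwartzMap.fourierTransformCLM_apply]; rfl
    rw [this]
    exact (SchwartzMap.fourierTransformCLM ℂ (cplx f)).integrable
  have hinv := (cplx f).continuous.fourierInv_fourier_eq hg hFg
  have hinvu : 𝓕⁻ (𝓕 ⇑(cplx f)) u = (f u : ℂ) := by rw [hinv]; rfl
  have hπ : (2 * π : ℝ) ≠ 0 := by positivity
  have hcv : (∫ ξ : ℝ, (∫ v : ℝ, ((f v : ℝ) : ℂ) * Complex.exp (-(Complex.I * ξ) * v))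
        * Complex.exp (Complex.I * ξ * u))
      = |(2 * π : ℝ)| • ∫ w : ℝ, (𝓕 ⇑(cplx f) w) * Complex.exp (Complex.I * (2 * π * w) * u) := by
    rw [← MeasureTheory.Measure.integral_comp_div
      (fun w : ℝ => (𝓕 ⇑(cplx f) w) * Complex.exp (Complex.I * (2 * π * w) * u)) (2 * π)]
    congr 1
    ext ξ
    rw [F_eq]
    congr 1
    have h1 : ((ξ / (2 * π) : ℝ) : ℂ) = (ξ : ℂ) / (2 * π) := by push_cast; ring
    have h2 : (2 * (π:ℂ)) ≠ 0 := by simp [Real.pi_ne_zero]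
    rw [h1]
    field_simp
  have hinv2 : (∫ w : ℝ, (𝓕 ⇑(cplx f) w) * Complex.exp (Complex.I * (2 * π * w) * u))
      = (f u : ℂ) := by
    rw [← hinvu, Real.fourierInv_eq']
    congr 1
    ext w
    rw [smul_eq_mul, mul_comm]
    congr 1
    simp only [RCLike.inner_apply, conj_trivial]
    push_cast
    ring
  rw [hcv, hinv2, abs_of_pos (by positivity : (0:ℝ) < 2 * π), Complex.real_smul]
  have h2 : (2 * (π:ℂ)) ≠ 0 := by simp [Real.pi_ne_zero]
  push_cast
  field_simp

lemma norm_cexp' (z : ℂ) (y : ℝ) :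
    ‖Complex.exp (-z * y)‖ = Real.exp (-z.re * y) := by
  rw [Complex.norm_exp]
  congr 1
  simp [Complex.mul_re]

lemma integrable_cexp_of_re {μ : Measure ℝ} (z : ℂ)
    (h : Integrable (fun y => Real.exp (-z.re * y)) μ) :
    Integrable (fun y : ℝ => Complex.exp (-z * y)) μ := by
  refine h.mono' ((Complex.continuous_exp.comp
    (continuous_const.mul Complex.continuous_ofReal)).aestronglyMeasurable) ?_
  filter_upwards with y
  rw [norm_cexp']

instance convPow_prob (ρ : Measure ℝ) [IsProbabilityMeasure ρ] (n : ℕ) :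
    IsProbabilityMeasure (convPow ρ n) := by
  induction n with
  | zero => rw [convPow]; infer_instance
  | succ n ih =>
    rw [convPow]
    exact Measure.isProbabilityMeasure_map ((measurable_fst.add measurable_snd).aemeasurable)

lemma integrable_cexp_convPow (ρ : Measure ℝ) [IsProbabilityMeasure ρ] (z : ℂ)
    (h : Integrable (fun y => Real.exp (-z.re * y)) ρ) (n : ℕ) :
    Integrable (fun y : ℝ => Complex.exp (-z * y)) (convPow ρ n) := by
  induction n with
  | zero =>
    rw [convPow]
    refine ⟨(Complex.continuous_exp.comp
      (continuous_const.mul Complex.continuous_ofReal)).aestronglyMeasurable, ?_⟩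
    rw [HasFiniteIntegral, lintegral_dirac]
    exact ENNReal.coe_lt_top
  | succ n ih =>
    rw [convPow]
    have hmeas : AEStronglyMeasurable (fun y : ℝ => Complex.exp (-z * y))
        (((convPow ρ n).prod ρ).map (fun p => p.1 + p.2)) :=
      (Complex.continuous_exp.comp
        (continuous_const.mul Complex.continuous_ofReal)).aestronglyMeasurable
    rw [integrable_map_measure hmeas ((measurable_fst.add measurable_snd).aemeasurable)]
    have : (fun y : ℝ => Complex.exp (-z * y)) ∘ (fun p : ℝ × ℝ => p.1 + p.2)
        = fun p : ℝ × ℝ => Complex.exp (-z * p.1) * Complex.exp (-z * p.2) := by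
      ext p
      simp only [Function.comp_apply, ← Complex.exp_add]
      push_cast
      ring_nf
    rw [this]
    exact ih.mul_prod (integrable_cexp_of_re z h)

lemma integral_cexp_convPow (ρ : Measure ℝ) [IsProbabilityMeasure ρ] (z : ℂ)
    (h : Integrable (fun y => Real.exp (-z.re * y)) ρ) (n : ℕ) :
    ∫ y, Complex.exp (-z * y) ∂(convPow ρ n) = (∫ y, Complex.exp (-z * y) ∂ρ) ^ n := by
  induction n with
  | zero =>
    rw [convPow]
    simp
  | succ n ih =>
    rw [convPow]
    have hmeas : AEStronglyMeasurable (fun y : ℝ => Complex.exp (-z * y))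
        (((convPow ρ n).prod ρ).map (fun p => p.1 + p.2)) :=
      (Complex.continuous_exp.comp
        (continuous_const.mul Complex.continuous_ofReal)).aestronglyMeasurable
    rw [integral_map (φ := fun p : ℝ × ℝ => p.1 + p.2) ((measurable_fst.add measurable_snd).aemeasurable) hmeas]
    have : ∀ p : ℝ × ℝ, Complex.exp (-z * ((p.1 + p.2 : ℝ) : ℂ))
        = Complex.exp (-z * p.1) * Complex.exp (-z * p.2) := by
      intro p
      rw [← Complex.exp_add]
      push_cast
      ring_nf
    simp_rw [this]
    rw [MeasureTheory.integral_prod_mul (μ := convPow ρ n) (ν := ρ)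
      (f := fun y : ℝ => Complex.exp (-z * y)) (g := fun y : ℝ => Complex.exp (-z * y)),
      ih, pow_succ]

lemma my_integral_ofReal {μ : Measure ℝ} {g : ℝ → ℝ} :
    ∫ y, ((g y : ℝ) : ℂ) ∂μ = ((∫ y, g y ∂μ : ℝ) : ℂ) :=
  integral_ofReal

lemma stepA (ρ : Measure ℝ) [IsProbabilityMeasure ρ] (a : ℝ)
    (hIρ : Integrable (fun y => Real.exp (-a * y)) ρ)
    (f : SchwartzMap ℝ ℝ) (x : ℝ) (n : ℕ) :
    ((∫ y, Real.exp (-a * y) * f (x + y) ∂(convPow ρ n) : ℝ) : ℂ)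
      = (1 / (2 * (π : ℂ))) *
        ∫ ξ : ℝ, (∫ u : ℝ, ((f u : ℝ) : ℂ) * Complex.exp (-(Complex.I * ξ) * u))
          * Complex.exp (Complex.I * ξ * x)
          * (∫ y, Complex.exp (-((a : ℂ) - Complex.I * ξ) * y) ∂ρ) ^ n := by
  set F : ℝ → ℂ := fun ξ => ∫ u : ℝ, ((f u : ℝ) : ℂ) * Complex.exp (-(Complex.I * ξ) * u)
    with hFdef
  set G : SchwartzMap ℝ ℂ := SchwartzMap.fourierTransformCLM ℂ (cplx f) with hGdef
  have hFG : ∀ ξ, F ξ = G (ξ / (2 * π)) := by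
    intro ξ
    exact (F_eq f ξ).trans (by rw [hGdef, SchwartzMap.fourierTransformCLM_apply]; rfl)
  have hFcont : Continuous F := by
    have : F = fun ξ => G (ξ / (2 * π)) := funext hFG
    rw [this]
    exact G.continuous.comp (continuous_id.div_const _)
  have hFint : Integrable F := by
    have : F = fun ξ => G (ξ / (2 * π)) := funext hFG
    rw [this]
    exact G.integrable.comp_div (by positivity)
  have haρ : Integrable (fun y => Real.exp (-((a:ℂ)).re * y)) ρ := by
    simpa using hIρ
  have hexp_n : Integrable (fun y => Real.exp (-a * y)) (convPow ρ n) := by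
    have := (integrable_cexp_convPow ρ (a : ℂ) haρ n).norm
    refine this.congr ?_
    filter_upwards with y
    rw [norm_cexp']
    norm_num
  -- the product function
  set Φ : ℝ × ℝ → ℂ := fun p => Complex.exp (-(a:ℂ) * p.1)
      * (F p.2 * Complex.exp (Complex.I * p.2 * (x + p.1))) with hΦdef
  have hΦcont : Continuous Φ := by
    apply Continuous.mul
    · exact Complex.continuous_exp.comp
        (continuous_const.mul (Complex.continuous_ofReal.comp continuous_fst))
    · apply Continuous.mul (hFcont.comp continuous_snd)
      apply Complex.continuous_exp.comp
      fun_prop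
  have hΦint : Integrable Φ ((convPow ρ n).prod (volume : Measure ℝ)) := by
    refine Integrable.mono' (g := fun p : ℝ × ℝ => Real.exp (-a * p.1) * ‖F p.2‖)
      (hexp_n.mul_prod hFint.norm) hΦcont.aestronglyMeasurable ?_
    filter_upwards with p
    rw [hΦdef]
    simp only [norm_mul]
    rw [norm_cexp' (a:ℂ) p.1]
    have h1 : ‖Complex.exp (Complex.I * p.2 * (x + p.1))‖ = 1 := by
      rw [Complex.norm_exp]
      have : (Complex.I * (p.2 : ℂ) * ((x : ℂ) + (p.1 : ℂ))).re = 0 := by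
        simp [Complex.mul_re, Complex.mul_im]
      rw [this, Real.exp_zero]
    rw [h1]
    simp [Complex.ofReal_re]
  -- main computation
  rw [← my_integral_ofReal]
  have hpt : ∀ y : ℝ, ((Real.exp (-a * y) * f (x + y) : ℝ) : ℂ)
      = (1 / (2 * (π:ℂ))) * ∫ ξ : ℝ, Φ (y, ξ) := by
    intro y
    have h3 : ((f (x + y) : ℝ) : ℂ) = (1 / (2 * (π:ℂ))) *
        ∫ ξ : ℝ, F ξ * Complex.exp (Complex.I * ξ * ((x + y : ℝ) : ℂ)) := inv_key f (x + y)
    have h2 : (∫ ξ : ℝ, Φ (y, ξ)) = Complex.exp (-(a:ℂ) * y) *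
        ∫ ξ : ℝ, F ξ * Complex.exp (Complex.I * ξ * ((x + y : ℝ) : ℂ)) := by
      rw [← MeasureTheory.integral_const_mul]
      congr 1
      ext ξ
      show Complex.exp (-(a:ℂ) * y) * (F ξ * Complex.exp (Complex.I * ξ * ((x:ℂ) + y))) = _
      push_cast
      ring
    rw [h2]
    push_cast [h3]
    ring
  simp_rw [hpt]
  rw [MeasureTheory.integral_const_mul]
  have hswap : (∫ y : ℝ, ∫ ξ : ℝ, Φ (y, ξ) ∂(volume : Measure ℝ) ∂(convPow ρ n))
      = ∫ ξ : ℝ, ∫ y : ℝ, Φ (y, ξ) ∂(convPow ρ n) ∂(volume : Measure ℝ) :=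
    MeasureTheory.integral_integral_swap (f := fun y ξ => Φ (y, ξ)) hΦint
  rw [hswap]
  congr 1
  apply MeasureTheory.integral_congr_ae
  filter_upwards with ξ
  have hz : ((a:ℂ) - Complex.I * ξ).re = a := by simp
  have hIz : Integrable (fun y => Real.exp (-((a:ℂ) - Complex.I * ξ).re * y)) ρ := by
    rw [hz]; exact hIρ
  calc (∫ y : ℝ, Φ (y, ξ) ∂(convPow ρ n))
      = ∫ y : ℝ, (F ξ * Complex.exp (Complex.I * ξ * x)) *
          Complex.exp (-((a:ℂ) - Complex.I * ξ) * y) ∂(convPow ρ n) := by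
        congr 1
        ext y
        show Complex.exp (-(a:ℂ) * y) * (F ξ * Complex.exp (Complex.I * ξ * ((x:ℂ) + y))) = _
        have he : Complex.exp (-(a:ℂ) * y) * Complex.exp (Complex.I * ξ * ((x:ℂ) + y))
            = Complex.exp (Complex.I * ξ * x) *
              Complex.exp (-((a:ℂ) - Complex.I * ξ) * y) := by
          rw [← Complex.exp_add, ← Complex.exp_add]
          congr 1
          ring
        linear_combination F ξ * he
    _ = (F ξ * Complex.exp (Complex.I * ξ * x)) *
          ∫ y : ℝ, Complex.exp (-((a:ℂ) - Complex.I * ξ) * y) ∂(convPow ρ n) :=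
        MeasureTheory.integral_const_mul _ _
    _ = F ξ * Complex.exp (Complex.I * ξ * x) *
          (∫ y : ℝ, Complex.exp (-((a:ℂ) - Complex.I * ξ) * y) ∂ρ) ^ n := by
        rw [integral_cexp_convPow ρ _ hIz n]

theorem stmt14 (ρ : Measure ℝ) [IsProbabilityMeasure ρ] (η : ℝ) (hη : 0 < η)
    (hmom : Integrable (fun y => Real.exp (η * |y|)) ρ)
    (hdrift : 0 < ∫ y, y ∂ρ)
    (a : ℝ) (ha : 0 < a) (haη : a < η)
    (hsub : ∫ y, Real.exp (-a * y) ∂ρ < 1)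
    (f : SchwartzMap ℝ ℝ) (hf : ∀ x, 0 ≤ f x) (x : ℝ) :
    ((∑' n : ℕ, ∫ y, Real.exp (-a * y) * f (x + y) ∂(convPow ρ n) : ℝ) : ℂ)
      = (1 / (2 * Real.pi)) *
        ∫ ξ : ℝ, (∫ u : ℝ, ((f u : ℝ) : ℂ) * Complex.exp (-(Complex.I * ξ) * (u : ℂ)))
          * Complex.exp (Complex.I * ξ * x)
          * (1 - ∫ y, Complex.exp (-((a : ℂ) - Complex.I * ξ) * (y : ℂ)) ∂ρ)⁻¹ := by
  have hIρ : Integrable (fun y => Real.exp (-a * y)) ρ := by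
    refine hmom.mono' (Real.continuous_exp.comp (by fun_prop)).aestronglyMeasurable ?_
    filter_upwards with y
    rw [Real.norm_eq_abs, Real.abs_exp, Real.exp_le_exp]
    calc -a * y ≤ |(-a) * y| := le_abs_self _
      _ = a * |y| := by rw [abs_mul, abs_neg, abs_of_pos ha]
      _ ≤ η * |y| := by nlinarith [abs_nonneg y]
  set F : ℝ → ℂ := fun ξ => ∫ u : ℝ, ((f u : ℝ) : ℂ) * Complex.exp (-(Complex.I * ξ) * u)
    with hFdef
  set W : ℝ → ℂ := fun ξ => ∫ y : ℝ, Complex.exp (-((a:ℂ) - Complex.I * ξ) * y) ∂ρ with hWdef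
  set φa : ℝ := ∫ y, Real.exp (-a * y) ∂ρ with hφadef
  have hφa0 : 0 ≤ φa := integral_nonneg (fun y => (Real.exp_pos _).le)
  have hWle : ∀ ξ, ‖W ξ‖ ≤ φa := by
    intro ξ
    refine (norm_integral_le_integral_norm _).trans (le_of_eq ?_)
    rw [hφadef]
    congr 1
    ext y
    rw [norm_cexp']
    congr 2
    simp
  have hWlt : ∀ ξ, ‖W ξ‖ < 1 := fun ξ => lt_of_le_of_lt (hWle ξ) hsub
  -- Fourier transform integrability/continuity of F
  set G : SchwartzMap ℝ ℂ := SchwartzMap.fourierTransformCLM ℂ (cplx f) with hGdef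
  have hFG : ∀ ξ, F ξ = G (ξ / (2 * π)) := by
    intro ξ
    exact (F_eq f ξ).trans (by rw [hGdef, SchwartzMap.fourierTransformCLM_apply]; rfl)
  have hFcont : Continuous F := by
    have : F = fun ξ => G (ξ / (2 * π)) := funext hFG
    rw [this]
    exact G.continuous.comp (continuous_id.div_const _)
  have hFint : Integrable F := by
    have : F = fun ξ => G (ξ / (2 * π)) := funext hFG
    rw [this]
    exact G.integrable.comp_div (by positivity)
  -- measurability of W
  have hWm : StronglyMeasurable W := by
    apply MeasureTheory.StronglyMeasurable.integral_prod_right'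
      (f := fun p : ℝ × ℝ => Complex.exp (-((a:ℂ) - Complex.I * p.1) * p.2))
    exact (Complex.continuous_exp.comp (by fun_prop)).stronglyMeasurable
  set T : ℕ → ℝ → ℂ := fun n ξ => F ξ * Complex.exp (Complex.I * ξ * x) * (W ξ) ^ n
    with hTdef
  have hTnorm : ∀ n ξ, ‖T n ξ‖ = ‖F ξ‖ * ‖W ξ‖ ^ n := by
    intro n ξ
    rw [hTdef]
    simp only [norm_mul, norm_pow]
    have h1 : ‖Complex.exp (Complex.I * ξ * x)‖ = 1 := by
      rw [Complex.norm_exp]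
      have : (Complex.I * (ξ:ℂ) * (x:ℂ)).re = 0 := by simp [Complex.mul_re, Complex.mul_im]
      rw [this, Real.exp_zero]
    rw [h1, mul_one]
  have hTint : ∀ n, Integrable (T n) := by
    intro n
    refine Integrable.mono' (g := fun ξ => ‖F ξ‖ * φa ^ n)
      (hFint.norm.mul_const _) ?_ ?_
    · exact ((hFcont.stronglyMeasurable.mul
        ((Complex.continuous_exp.comp (by fun_prop)).stronglyMeasurable)).mul
        ((continuous_pow n).comp_stronglyMeasurable hWm)).aestronglyMeasurable
    · filter_upwards with ξ
      rw [hTnorm]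
      gcongr
      exact hWle ξ
  have hTsum : Summable (fun n => ∫ ξ, ‖T n ξ‖) := by
    refine Summable.of_nonneg_of_le (fun n => integral_nonneg (fun ξ => norm_nonneg _))
      (fun n => ?_) (((summable_geometric_of_lt_one hφa0 hsub).mul_left (∫ ξ, ‖F ξ‖)))
    calc (∫ ξ, ‖T n ξ‖) ≤ ∫ ξ, ‖F ξ‖ * φa ^ n := by
          refine integral_mono (hTint n).norm (hFint.norm.mul_const _) (fun ξ => ?_)
          rw [hTnorm]
          gcongr
          exact hWle ξ
      _ = (∫ ξ, ‖F ξ‖) * φa ^ n := by rw [integral_mul_const]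
  calc ((∑' n : ℕ, ∫ y, Real.exp (-a * y) * f (x + y) ∂(convPow ρ n) : ℝ) : ℂ)
      = ∑' n : ℕ, ((∫ y, Real.exp (-a * y) * f (x + y) ∂(convPow ρ n) : ℝ) : ℂ) :=
        Complex.ofReal_tsum _
    _ = ∑' n : ℕ, (1 / (2 * (π:ℂ))) * ∫ ξ : ℝ, T n ξ := by
        refine tsum_congr (fun n => ?_)
        rw [stepA ρ a hIρ f x n]
    _ = (1 / (2 * (π:ℂ))) * ∑' n : ℕ, ∫ ξ : ℝ, T n ξ := tsum_mul_left
    _ = (1 / (2 * (π:ℂ))) * ∫ ξ : ℝ, ∑' n : ℕ, T n ξ := by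
        rw [MeasureTheory.integral_tsum_of_summable_integral_norm hTint hTsum]
    _ = (1 / (2 * (π:ℂ))) * ∫ ξ : ℝ, F ξ * Complex.exp (Complex.I * ξ * x) * (1 - W ξ)⁻¹ := by
        congr 1
        refine MeasureTheory.integral_congr_ae ?_
        filter_upwards with ξ
        rw [hTdef]
        rw [tsum_mul_left, tsum_geometric_of_norm_lt_one (hWlt ξ)]
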